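/- Let X and Y be second-countable compact totally disconnected Hausdorff spaces and σ : X → X, τ : Y → Y surjective local homeomorphisms. Suppose there exist continuous open maps f : X → Y and f' : Y → X and continuous maps a : X → ℕ₀, k : X → ℕ₀, a' : Y → ℕ₀, k' : Y → ℕ₀ such that σ^{a(x)}(f'(f(x))) = σ^{a(x)}(x) for all x ∈ X, τ^{k(x)}(f(σ(x))) = τ^{k(x)+1}(f(x)) for all x ∈ X, τ^{a'(y)}(f(f'(y))) = τ^{a'(y)}(y) for all y ∈ Y, and σ^{k'(y)}(f'(τ(y))) = σ^{k'(y)+1}(f'(y)) for all y ∈ Y. Then (X̄, σ̄) and (Ȳ, τ̄) are conjugate, i.e. there is a homeomorphism H : X̄ → Ȳ with H ∘ σ̄ = τ̄ ∘ H. -/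

import Mathlib

open Set Function

/-- The two-sided extension `X̄` of `(X, σ)`: bi-infinite sequences compatible with `σ`,
topologised as a subspace of the product `X^ℤ`. -/
def shiftSpace {X : Type*} (σ : X → X) : Set (ℤ → X) :=
  {ξ | ∀ n : ℤ, σ (ξ n) = ξ (n + 1)}

/-- The shift homeomorphism `σ̄` on `X̄`, `σ̄(ξ)_n = σ(ξ_n)`. -/
def shiftMap {X : Type*} (σ : X → X) : shiftSpace σ → shiftSpace σ :=
  fun ξ => ⟨fun n => σ (ξ.1 n), fun n => congrArg σ (ξ.2 n)⟩

lemma shiftSpace.iterate {X : Type*} {σ : X → X} {ξ : ℤ → X} (hξ : ξ ∈ shiftSpace σ)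
    (j : ℕ) (n : ℤ) : σ^[j] (ξ n) = ξ (n + j) := by
  induction j with
  | zero => simp
  | succ j ih =>
    rw [Function.iterate_succ_apply', ih, hξ (n + j)]
    congr 1
    push_cast
    ring

lemma exists_bound_of_continuous_nat {Z : Type*} [TopologicalSpace Z] [CompactSpace Z]
    (g : Z → ℕ) (hg : Continuous g) : ∃ m, ∀ z, g z ≤ m := by
  have hfin : (Set.range g).Finite := (isCompact_range hg).finite ⟨by infer_instance⟩
  obtain ⟨m, hm⟩ := hfin.bddAbove
  exact ⟨m, fun z => hm ⟨z, rfl⟩⟩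

theorem stmt9 {X Y : Type*}
    [TopologicalSpace X] [SecondCountableTopology X] [CompactSpace X] [T2Space X]
    [TotallyDisconnectedSpace X]
    [TopologicalSpace Y] [SecondCountableTopology Y] [CompactSpace Y] [T2Space Y]
    [TotallyDisconnectedSpace Y]
    (σ : X → X) (τ : Y → Y)
    (hσc : Continuous σ) (hσs : Surjective σ) (hσl : IsLocalHomeomorph σ)
    (hτc : Continuous τ) (hτs : Surjective τ) (hτl : IsLocalHomeomorph τ)
    (f : X → Y) (f' : Y → X)
    (hfc : Continuous f) (hfo : IsOpenMap f) (hf'c : Continuous f') (hf'o : IsOpenMap f')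
    (a : X → ℕ) (k : X → ℕ) (a' : Y → ℕ) (k' : Y → ℕ)
    (hac : Continuous a) (hkc : Continuous k) (ha'c : Continuous a') (hk'c : Continuous k')
    (h1 : ∀ x : X, σ^[a x] (f' (f x)) = σ^[a x] x)
    (h2 : ∀ x : X, τ^[k x] (f (σ x)) = τ^[k x + 1] (f x))
    (h3 : ∀ y : Y, τ^[a' y] (f (f' y)) = τ^[a' y] y)
    (h4 : ∀ y : Y, σ^[k' y] (f' (τ y)) = σ^[k' y + 1] (f' y)) :
    ∃ H : shiftSpace σ ≃ₜ shiftSpace τ, ∀ ξ, H (shiftMap σ ξ) = shiftMap τ (H ξ) := by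
  -- A uniform bound for the four cocycle functions
  obtain ⟨m1, hm1⟩ := exists_bound_of_continuous_nat a hac
  obtain ⟨m2, hm2⟩ := exists_bound_of_continuous_nat k hkc
  obtain ⟨m3, hm3⟩ := exists_bound_of_continuous_nat a' ha'c
  obtain ⟨m4, hm4⟩ := exists_bound_of_continuous_nat k' hk'c
  set M : ℕ := max (max m1 m2) (max m3 m4) with hM
  have hMa : ∀ x, a x ≤ M := fun x =>
    le_trans (hm1 x) ((le_max_left m1 m2).trans (le_max_left _ _))
  have hMk : ∀ x, k x ≤ M := fun x =>
    le_trans (hm2 x) ((le_max_right m1 m2).trans (le_max_left _ _))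
  have hMa' : ∀ y, a' y ≤ M := fun y =>
    le_trans (hm3 y) ((le_max_left m3 m4).trans (le_max_right _ _))
  have hMk' : ∀ y, k' y ≤ M := fun y =>
    le_trans (hm4 y) ((le_max_right m3 m4).trans (le_max_right _ _))
  -- boosted intertwining identities
  have key2 : ∀ x, τ^[M] (f (σ x)) = τ (τ^[M] (f x)) := by
    intro x
    calc τ^[M] (f (σ x)) = τ^[M - k x] (τ^[k x] (f (σ x))) := by
          rw [← Function.iterate_add_apply, Nat.sub_add_cancel (hMk x)]
      _ = τ^[M - k x] (τ^[k x + 1] (f x)) := by rw [h2]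
      _ = τ^[M - k x + (k x + 1)] (f x) := by rw [← Function.iterate_add_apply]
      _ = τ (τ^[M] (f x)) := by
          rw [show M - k x + (k x + 1) = 1 + M by have := hMk x; omega, Function.iterate_add_apply,
            Function.iterate_one]
  have key4 : ∀ y, σ^[M] (f' (τ y)) = σ (σ^[M] (f' y)) := by
    intro y
    calc σ^[M] (f' (τ y)) = σ^[M - k' y] (σ^[k' y] (f' (τ y))) := by
          rw [← Function.iterate_add_apply, Nat.sub_add_cancel (hMk' y)]
      _ = σ^[M - k' y] (σ^[k' y + 1] (f' y)) := by rw [h4]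
      _ = σ^[M - k' y + (k' y + 1)] (f' y) := by rw [← Function.iterate_add_apply]
      _ = σ (σ^[M] (f' y)) := by
          rw [show M - k' y + (k' y + 1) = 1 + M by have := hMk' y; omega, Function.iterate_add_apply,
            Function.iterate_one]
  -- iterated versions
  have step' : ∀ (j : ℕ) (y : Y), σ^[M] (f' (τ^[j] y)) = σ^[j] (σ^[M] (f' y)) := by
    intro j
    induction j with
    | zero => intro y; simp
    | succ j ih =>
      intro y
      rw [Function.iterate_succ_apply, ih (τ y), key4, ← Function.iterate_succ_apply]
  have step : ∀ (j : ℕ) (x : X), τ^[M] (f (σ^[j] x)) = τ^[j] (τ^[M] (f x)) := by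
    intro j
    induction j with
    | zero => intro x; simp
    | succ j ih =>
      intro x
      rw [Function.iterate_succ_apply, ih (σ x), key2, ← Function.iterate_succ_apply]
  -- compositions are powers of the shifts
  have hgg' : ∀ x, σ^[M] (f' (τ^[M] (f x))) = σ^[2 * M] x := by
    intro x
    rw [step' M (f x), ← Function.iterate_add_apply]
    calc σ^[M + M] (f' (f x)) = σ^[M + M - a x] (σ^[a x] (f' (f x))) := by
          rw [← Function.iterate_add_apply,
            Nat.sub_add_cancel (le_trans (hMa x) (by omega))]
      _ = σ^[M + M - a x] (σ^[a x] x) := by rw [h1]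
      _ = σ^[2 * M] x := by
          rw [← Function.iterate_add_apply,
            Nat.sub_add_cancel (le_trans (hMa x) (by omega)),
            show M + M = 2 * M by ring]
  have hg'g : ∀ y, τ^[M] (f (σ^[M] (f' y))) = τ^[2 * M] y := by
    intro y
    rw [step M (f' y), ← Function.iterate_add_apply]
    calc τ^[M + M] (f (f' y)) = τ^[M + M - a' y] (τ^[a' y] (f (f' y))) := by
          rw [← Function.iterate_add_apply,
            Nat.sub_add_cancel (le_trans (hMa' y) (by omega))]
      _ = τ^[M + M - a' y] (τ^[a' y] y) := by rw [h3]
      _ = τ^[2 * M] y := by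
          rw [← Function.iterate_add_apply,
            Nat.sub_add_cancel (le_trans (hMa' y) (by omega)),
            show M + M = 2 * M by ring]
  -- the forward map
  have Hf_mem : ∀ ξ : shiftSpace σ, (fun n : ℤ => τ^[M] (f (ξ.1 n))) ∈ shiftSpace τ := by
    intro ξ n
    rw [← key2, ξ.2 n]
  have Hg_mem : ∀ η : shiftSpace τ,
      (fun n : ℤ => σ^[M] (f' (η.1 (n - 2 * M)))) ∈ shiftSpace σ := by
    intro η n
    rw [← key4, η.2 (n - 2 * M)]
    congr 2
    ring
  refine ⟨{
      toFun := fun ξ => ⟨_, Hf_mem ξ⟩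
      invFun := fun η => ⟨_, Hg_mem η⟩
      left_inv := ?_
      right_inv := ?_
      continuous_toFun := ?_
      continuous_invFun := ?_ }, ?_⟩
  · intro ξ
    ext n
    show σ^[M] (f' (τ^[M] (f (ξ.1 (n - 2 * M))))) = ξ.1 n
    rw [hgg', shiftSpace.iterate ξ.2 (2 * M) (n - 2 * M)]
    congr 1
    push_cast
    ring
  · intro η
    ext n
    show τ^[M] (f (σ^[M] (f' (η.1 (n - 2 * M))))) = η.1 n
    rw [hg'g, shiftSpace.iterate η.2 (2 * M) (n - 2 * M)]
    congr 1
    push_cast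
    ring
  · refine Continuous.subtype_mk (continuous_pi fun n => ?_) _
    exact (hτc.iterate M).comp (hfc.comp ((continuous_apply n).comp continuous_subtype_val))
  · refine Continuous.subtype_mk (continuous_pi fun n => ?_) _
    exact (hσc.iterate M).comp
      (hf'c.comp ((continuous_apply (n - 2 * M)).comp continuous_subtype_val))
  · intro ξ
    ext n
    show τ^[M] (f (σ (ξ.1 n))) = τ (τ^[M] (f (ξ.1 n)))
    exact key2 (ξ.1 n)
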